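/- Let π₀ ∈ (0,1] and let F : ℝ → ℝ be nondecreasing, continuous at μ₀, with F(μ₀) = π₀/2; let G : ℝ → ℝ be nonincreasing with F(t) < G(t) for t < μ₀ and F(t) > G(t) for t > μ₀. Let (F̄ₙ), (Ḡₙ) be sequences of random functions with sup_t |F̄ₙ(t) − F(t)| → 0 and sup_t |Ḡₙ(t) − G(t)| → 0 in probability, and let (μ̂ₙ) satisfy F̄ₙ(μ̂ₙ) = Ḡₙ(μ̂ₙ) almost surely. Then the empirical null-proportion estimator π̂₀ₙ = min(2 F̄ₙ(μ̂ₙ), 1) converges in probability to π₀. -/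

import Mathlib

open MeasureTheory Filter

lemma abs_min_sub_min_le' (a b c : ℝ) : |min a c - min b c| ≤ |a - b| := by
  simp only [min_def]
  split_ifs <;> rw [abs_le] <;> constructor <;>
    linarith [le_abs_self (a - b), neg_abs_le (a - b)]

/-- Under the crossing setup (`F` nondecreasing and continuous at `μ₀`
with `F(μ₀) = π₀/2`, `G` nonincreasing, `F < G` left of `μ₀` and `F > G` right of
`μ₀`), if `F̄ₙ, Ḡₙ` converge uniformly in probability to `F, G` and `μ̂ₙ` solves
`F̄ₙ(μ̂ₙ) = Ḡₙ(μ̂ₙ)` almost surely, then the empirical null-proportion estimator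
`π̂₀ₙ = min(2F̄ₙ(μ̂ₙ), 1)` converges in probability to `π₀`. -/
theorem null_proportion_estimator_consistent
    {Ω : Type*} [MeasurableSpace Ω] (μ : Measure Ω) [IsProbabilityMeasure μ]
    (π₀ : ℝ) (hπ₀pos : 0 < π₀) (hπ₀le : π₀ ≤ 1)
    (F G : ℝ → ℝ) (μ₀ : ℝ)
    (hFmono : Monotone F) (hFcont : ContinuousAt F μ₀) (hFmed : F μ₀ = π₀ / 2)
    (hGanti : Antitone G)
    (hlt : ∀ t, t < μ₀ → F t < G t) (hgt : ∀ t, μ₀ < t → G t < F t)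
    (Fbar Gbar : ℕ → Ω → ℝ → ℝ)
    (hFbarMeas : ∀ n, Measurable fun p : Ω × ℝ => Fbar n p.1 p.2)
    (hGbarMeas : ∀ n, Measurable fun p : Ω × ℝ => Gbar n p.1 p.2)
    (muhat : ℕ → Ω → ℝ) (hmuhatMeas : ∀ n, Measurable (muhat n))
    (hFconv : ∀ δ : ℝ, 0 < δ →
      Tendsto (fun n => μ {ω | ∃ t : ℝ, δ < |Fbar n ω t - F t|}) atTop (nhds 0))
    (hGconv : ∀ δ : ℝ, 0 < δ →
      Tendsto (fun n => μ {ω | ∃ t : ℝ, δ < |Gbar n ω t - G t|}) atTop (nhds 0))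
    (hcross : ∀ n, ∀ᵐ ω ∂μ, Fbar n ω (muhat n ω) = Gbar n ω (muhat n ω)) :
    ∀ δ : ℝ, 0 < δ →
      Tendsto (fun n => μ {ω | δ < |min (2 * Fbar n ω (muhat n ω)) 1 - π₀|})
        atTop (nhds 0) := by
  intro δ hδ
  -- continuity of F at μ₀: pick η > 0 with |t-μ₀| < η → |F t - π₀/2| < δ/4
  obtain ⟨η, hη, hcont⟩ := Metric.continuousAt_iff.mp hFcont (δ / 4) (by positivity)
  have hcont' : ∀ t : ℝ, |t - μ₀| < η → |F t - π₀ / 2| < δ / 4 := by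
    intro t ht
    have := hcont (by simpa [Real.dist_eq] using ht)
    simpa [Real.dist_eq, hFmed] using this
  -- gaps at μ₀ ± η
  set a : ℝ := G (μ₀ - η) - F (μ₀ - η) with ha_def
  set b : ℝ := F (μ₀ + η) - G (μ₀ + η) with hb_def
  have ha : 0 < a := sub_pos.mpr (hlt _ (by linarith))
  have hb : 0 < b := sub_pos.mpr (hgt _ (by linarith))
  set ε : ℝ := min (min a b / 3) (δ / 4) with hε_def
  have hε : 0 < ε := lt_min (by positivity) (by positivity)
  have hεa : 2 * ε < a := by
    have h1 : ε ≤ min a b / 3 := min_le_left _ _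
    have h2 : min a b ≤ a := min_le_left _ _
    linarith
  have hεb : 2 * ε < b := by
    have h1 : ε ≤ min a b / 3 := min_le_left _ _
    have h2 : min a b ≤ b := min_le_right _ _
    linarith
  have hεδ : ε ≤ δ / 4 := min_le_right _ _
  -- set inclusion
  have hsub : ∀ n,
      {ω | δ < |min (2 * Fbar n ω (muhat n ω)) 1 - π₀|} ⊆
        {ω | ∃ t : ℝ, ε < |Fbar n ω t - F t|} ∪
          ({ω | ∃ t : ℝ, ε < |Gbar n ω t - G t|} ∪
            {ω | ¬ Fbar n ω (muhat n ω) = Gbar n ω (muhat n ω)}) := by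
    intro n ω hω
    by_contra hmem
    simp only [Set.mem_union, Set.mem_setOf_eq, not_or, not_exists, not_lt, not_not] at hmem
    obtain ⟨hFb, hGb, heq⟩ := hmem
    set x := muhat n ω with hx
    have hFx := abs_le.mp (hFb x)
    have hGx := abs_le.mp (hGb x)
    -- x is strictly inside (μ₀ - η, μ₀ + η)
    have hxl : μ₀ - η < x := by
      by_contra h
      push_neg at h
      have h1 : F x ≤ F (μ₀ - η) := hFmono h
      have h2 : G (μ₀ - η) ≤ G x := hGanti h
      linarith
    have hxr : x < μ₀ + η := by
      by_contra h
      push_neg at h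
      have h1 : F (μ₀ + η) ≤ F x := hFmono h
      have h2 : G x ≤ G (μ₀ + η) := hGanti h
      linarith
    have hFxc : |F x - π₀ / 2| < δ / 4 := hcont' x (abs_lt.mpr ⟨by linarith, by linarith⟩)
    have hFxc' := abs_lt.mp hFxc
    -- so |Fbar x - π₀/2| ≤ δ/2
    have hclose : |Fbar n ω x - π₀ / 2| ≤ δ / 2 := by
      rw [abs_le]; constructor <;> linarith
    -- transfer through min
    have hmin : |min (2 * Fbar n ω x) 1 - π₀| ≤ δ := by
      have h1 : |min (2 * Fbar n ω x) 1 - min π₀ 1| ≤ |2 * Fbar n ω x - π₀| :=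
        abs_min_sub_min_le' _ _ _
      rw [min_eq_left hπ₀le] at h1
      have h2 : |2 * Fbar n ω x - π₀| = 2 * |Fbar n ω x - π₀ / 2| := by
        rw [show 2 * Fbar n ω x - π₀ = 2 * (Fbar n ω x - π₀ / 2) by ring, abs_mul]
        norm_num
      rw [h2] at h1
      linarith
    exact absurd hω (not_lt.mpr hmin)
  -- measure bound and squeeze
  have hD : ∀ n, μ {ω | ¬ Fbar n ω (muhat n ω) = Gbar n ω (muhat n ω)} = 0 := by
    intro n
    exact ae_iff.mp (hcross n)
  have hbound : ∀ n,
      μ {ω | δ < |min (2 * Fbar n ω (muhat n ω)) 1 - π₀|} ≤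
        μ {ω | ∃ t : ℝ, ε < |Fbar n ω t - F t|} +
          μ {ω | ∃ t : ℝ, ε < |Gbar n ω t - G t|} := by
    intro n
    calc μ {ω | δ < |min (2 * Fbar n ω (muhat n ω)) 1 - π₀|}
        ≤ μ ({ω | ∃ t : ℝ, ε < |Fbar n ω t - F t|} ∪
            ({ω | ∃ t : ℝ, ε < |Gbar n ω t - G t|} ∪
              {ω | ¬ Fbar n ω (muhat n ω) = Gbar n ω (muhat n ω)})) :=
          measure_mono (hsub n)
      _ ≤ μ {ω | ∃ t : ℝ, ε < |Fbar n ω t - F t|} +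
            μ ({ω | ∃ t : ℝ, ε < |Gbar n ω t - G t|} ∪
              {ω | ¬ Fbar n ω (muhat n ω) = Gbar n ω (muhat n ω)}) := measure_union_le _ _
      _ ≤ μ {ω | ∃ t : ℝ, ε < |Fbar n ω t - F t|} +
            (μ {ω | ∃ t : ℝ, ε < |Gbar n ω t - G t|} +
              μ {ω | ¬ Fbar n ω (muhat n ω) = Gbar n ω (muhat n ω)}) := by
          gcongr
          exact measure_union_le _ _
      _ = μ {ω | ∃ t : ℝ, ε < |Fbar n ω t - F t|} +
            μ {ω | ∃ t : ℝ, ε < |Gbar n ω t - G t|} := by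
          rw [hD n, add_zero]
  have hsum : Tendsto (fun n =>
      μ {ω | ∃ t : ℝ, ε < |Fbar n ω t - F t|} +
        μ {ω | ∃ t : ℝ, ε < |Gbar n ω t - G t|}) atTop (nhds 0) := by
    simpa using (hFconv ε hε).add (hGconv ε hε)
  exact tendsto_of_tendsto_of_tendsto_of_le_of_le tendsto_const_nhds hsum
    (fun n => zero_le) hbound
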